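/- Fix r2, r3 > 0. For r1 > 0, let θ1(r1) = arccos[(cosh(r1 + r2)·cosh(r1 + r3) − cosh(r2 + r3)) / (sinh(r1 + r2)·sinh(r1 + r3))]. Then the function r1 ↦ θ1(r1)·cosh(r1) is strictly decreasing on (0, +∞). -/

import Mathlib

set_option maxHeartbeats 1000000

open Real

lemma arccos_le_aux {u : ℝ} (h1 : -1 < u) (h2 : u < 1) :
    Real.arccos u ≤ 2 * (1 - u) / Real.sqrt (1 - u ^ 2) := by
  set θ := Real.arccos u with hθdef
  have hθpos : 0 < θ := Real.arccos_pos.2 h2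
  have hθlt : θ < π := lt_of_le_of_ne (Real.arccos_le_pi u)
    (fun h => absurd (Real.arccos_eq_pi.1 h) (by linarith))
  have hpi := Real.pi_pos
  have htan : θ / 2 < Real.tan (θ / 2) := Real.lt_tan (by linarith) (by linarith)
  have hc : 0 < Real.cos (θ / 2) := Real.cos_pos_of_mem_Ioo ⟨by linarith, by linarith⟩
  have hshp : 0 < Real.sin (θ / 2) := Real.sin_pos_of_pos_of_lt_pi (by linarith) (by linarith)
  have hcθ : Real.cos θ = u := Real.cos_arccos h1.le h2.le
  have hsθ : Real.sin θ = Real.sqrt (1 - u ^ 2) := Real.sin_arccos u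
  have h2m : Real.cos θ = 2 * Real.cos (θ / 2) ^ 2 - 1 := by
    rw [← Real.cos_two_mul]; congr 1; ring
  have hpyth := Real.sin_sq_add_cos_sq (θ / 2)
  have hsin2 : Real.sin (θ / 2) ^ 2 = (1 - u) / 2 := by nlinarith
  have hdouble : Real.sin θ = 2 * Real.sin (θ / 2) * Real.cos (θ / 2) := by
    rw [← Real.sin_two_mul]; congr 1; ring
  have htv : Real.tan (θ / 2) = (1 - u) / Real.sqrt (1 - u ^ 2) := by
    rw [Real.tan_eq_sin_div_cos, ← hsθ, hdouble,
      div_eq_div_iff hc.ne' (by positivity)]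
    nlinarith [hsin2]
  rw [show (2:ℝ) * (1 - u) / Real.sqrt (1 - u ^ 2)
      = 2 * ((1 - u) / Real.sqrt (1 - u ^ 2)) from by ring, ← htv]
  linarith

theorem stmt_14 (r2 r3 : ℝ) (h2 : 0 < r2) (h3 : 0 < r3) :
    StrictAntiOn
      (fun r1 : ℝ =>
        Real.arccos ((Real.cosh (r1 + r2) * Real.cosh (r1 + r3) - Real.cosh (r2 + r3)) /
          (Real.sinh (r1 + r2) * Real.sinh (r1 + r3))) * Real.cosh r1)
      (Set.Ioi 0) := by
  have key : ∀ x ∈ Set.Ioi (0:ℝ), ∃ d,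
      HasDerivAt (fun r1 : ℝ =>
        Real.arccos ((Real.cosh (r1 + r2) * Real.cosh (r1 + r3) - Real.cosh (r2 + r3)) /
          (Real.sinh (r1 + r2) * Real.sinh (r1 + r3))) * Real.cosh r1) d x ∧ d < 0 := by
    intro x hx
    rw [Set.mem_Ioi] at hx
    set a := x + r2 with ha
    set b := x + r3 with hb
    have hsa : 0 < Real.sinh a := by rw [Real.sinh_pos_iff]; positivity
    have hsb : 0 < Real.sinh b := by rw [Real.sinh_pos_iff]; positivity
    have hca : 0 < Real.cosh a := Real.cosh_pos a
    have hcb : 0 < Real.cosh b := Real.cosh_pos b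
    have hsx : 0 < Real.sinh x := by rw [Real.sinh_pos_iff]; exact hx
    have hcx : 0 < Real.cosh x := Real.cosh_pos x
    have hs2 : 0 < Real.sinh r2 := by rw [Real.sinh_pos_iff]; exact h2
    have hs3 : 0 < Real.sinh r3 := by rw [Real.sinh_pos_iff]; exact h3
    set A := Real.cosh a * Real.cosh b - Real.cosh (r2 + r3) with hA
    set B := Real.sinh a * Real.sinh b with hBdef
    have hB : 0 < B := mul_pos hsa hsb
    set u := A / B with hu
    -- B - A = 2 sinh r2 sinh r3
    have hab : Real.cosh (r2 - r3) = Real.cosh a * Real.cosh b - Real.sinh a * Real.sinh b := by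
      rw [show r2 - r3 = a - b from by rw [ha, hb]; ring]
      exact Real.cosh_sub a b
    have hr23 : Real.cosh (r2 + r3) = Real.cosh r2 * Real.cosh r3 + Real.sinh r2 * Real.sinh r3 :=
      Real.cosh_add r2 r3
    have hr23' : Real.cosh (r2 - r3) = Real.cosh r2 * Real.cosh r3 - Real.sinh r2 * Real.sinh r3 :=
      Real.cosh_sub r2 r3
    have hBA : B - A = 2 * Real.sinh r2 * Real.sinh r3 := by
      rw [hBdef, hA]
      linarith
    have hu1 : u < 1 := by
      rw [hu, div_lt_one hB]
      nlinarith
    have hu2 : -1 < u := by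
      rw [hu, lt_div_iff₀ hB]
      have habs : Real.cosh (r2 + r3) < Real.cosh (a + b) := by
        rw [Real.cosh_lt_cosh, abs_of_pos (by positivity), abs_of_pos (by rw [ha, hb]; positivity)]
        rw [ha, hb]; linarith
      have hcab : Real.cosh (a + b) = Real.cosh a * Real.cosh b + Real.sinh a * Real.sinh b :=
        Real.cosh_add a b
      rw [hA]
      nlinarith
    have h1mu : 0 < 1 - u ^ 2 := by nlinarith
    set s := Real.sqrt (1 - u ^ 2) with hsdef
    have hs : 0 < s := Real.sqrt_pos.2 h1mu
    -- derivative of u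
    have hda : HasDerivAt (fun y : ℝ => y + r2) 1 x := (hasDerivAt_id x).add_const r2
    have hdb : HasDerivAt (fun y : ℝ => y + r3) 1 x := (hasDerivAt_id x).add_const r3
    have hdA : HasDerivAt (fun y : ℝ => Real.cosh (y + r2) * Real.cosh (y + r3) - Real.cosh (r2 + r3))
        (Real.sinh a * Real.cosh b + Real.cosh a * Real.sinh b) x := by
      have := ((hda.cosh).mul (hdb.cosh)).sub_const (Real.cosh (r2 + r3))
      exact this.congr_deriv (by rw [ha, hb]; ring)
    have hdB : HasDerivAt (fun y : ℝ => Real.sinh (y + r2) * Real.sinh (y + r3))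
        (Real.cosh a * Real.sinh b + Real.sinh a * Real.cosh b) x := by
      have := (hda.sinh).mul (hdb.sinh)
      exact this.congr_deriv (by rw [ha, hb]; ring)
    set S := Real.sinh a * Real.cosh b + Real.cosh a * Real.sinh b with hS
    have hSpos : 0 < S := by positivity
    have hdu : HasDerivAt (fun y : ℝ =>
        (Real.cosh (y + r2) * Real.cosh (y + r3) - Real.cosh (r2 + r3)) /
          (Real.sinh (y + r2) * Real.sinh (y + r3)))
        ((S * B - A * (Real.cosh a * Real.sinh b + Real.sinh a * Real.cosh b)) / B ^ 2) x := by
      exact hdA.div hdB hB.ne'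
    have hu'eq : (S * B - A * (Real.cosh a * Real.sinh b + Real.sinh a * Real.cosh b)) / B ^ 2
        = S * (2 * Real.sinh r2 * Real.sinh r3) / B ^ 2 := by
      rw [show Real.cosh a * Real.sinh b + Real.sinh a * Real.cosh b = S from by rw [hS]; ring]
      rw [show S * B - A * S = S * (B - A) from by ring, hBA]
    set u' := S * (2 * Real.sinh r2 * Real.sinh r3) / B ^ 2 with hu'def
    have hu'pos : 0 < u' := by positivity
    have hdarc : HasDerivAt (fun y : ℝ =>
        Real.arccos ((Real.cosh (y + r2) * Real.cosh (y + r3) - Real.cosh (r2 + r3)) /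
          (Real.sinh (y + r2) * Real.sinh (y + r3)))) (-(1 / s) * u') x := by
      have h := (Real.hasDerivAt_arccos (ne_of_gt hu2) (ne_of_lt hu1)).comp x hdu
      rw [hu'eq] at h
      exact h
    have hdf : HasDerivAt (fun r1 : ℝ =>
        Real.arccos ((Real.cosh (r1 + r2) * Real.cosh (r1 + r3) - Real.cosh (r2 + r3)) /
          (Real.sinh (r1 + r2) * Real.sinh (r1 + r3))) * Real.cosh r1)
        ((-(1 / s) * u') * Real.cosh x + Real.arccos u * Real.sinh x) x := by
      exact hdarc.mul (Real.hasDerivAt_cosh x)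
    refine ⟨_, hdf, ?_⟩
    -- negativity
    have harc : Real.arccos u ≤ 2 * (1 - u) / s := arccos_le_aux hu2 hu1
    -- key geometric inequality
    have hkey : 2 * Real.sinh x * B < Real.cosh x * S := by
      have e3 : Real.cosh b * Real.cosh x - Real.sinh b * Real.sinh x = Real.cosh r3 := by
        rw [← Real.cosh_sub]; congr 1; rw [hb]; ring
      have e2 : Real.cosh a * Real.cosh x - Real.sinh a * Real.sinh x = Real.cosh r2 := by
        rw [← Real.cosh_sub]; congr 1; rw [ha]; ring
      have p3 : 0 < Real.sinh a * (Real.cosh b * Real.cosh x - Real.sinh b * Real.sinh x) := by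
        rw [e3]; positivity
      have p2 : 0 < Real.sinh b * (Real.cosh a * Real.cosh x - Real.sinh a * Real.sinh x) := by
        rw [e2]; positivity
      rw [hBdef, hS]; nlinarith
    have h1u : 1 - u = 2 * Real.sinh r2 * Real.sinh r3 / B := by
      rw [hu, eq_div_iff hB.ne']
      field_simp
      linarith [hBA]
    have step2 : 2 * (1 - u) * Real.sinh x < u' * Real.cosh x := by
      rw [h1u, hu'def]
      rw [show 2 * (2 * Real.sinh r2 * Real.sinh r3 / B) * Real.sinh x
          = (2 * (2 * Real.sinh r2 * Real.sinh r3) * Real.sinh x) / B from by ring,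
        show S * (2 * Real.sinh r2 * Real.sinh r3) / B ^ 2 * Real.cosh x
          = (S * (2 * Real.sinh r2 * Real.sinh r3) * Real.cosh x) / B ^ 2 from by ring,
        div_lt_div_iff₀ hB (by positivity)]
      nlinarith [mul_lt_mul_of_pos_left hkey (mul_pos (mul_pos (by linarith : (0:ℝ) < 2 * Real.sinh r2) hs3) hB)]
    have final : Real.arccos u * Real.sinh x < (1 / s) * u' * Real.cosh x := by
      calc Real.arccos u * Real.sinh x ≤ (2 * (1 - u) / s) * Real.sinh x :=
            mul_le_mul_of_nonneg_right harc hsx.le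
        _ = (2 * (1 - u) * Real.sinh x) / s := by ring
        _ < (u' * Real.cosh x) / s := by
            exact (div_lt_div_iff_of_pos_right hs).2 step2
        _ = (1 / s) * u' * Real.cosh x := by ring
    linarith
  apply strictAntiOn_of_deriv_neg (convex_Ioi 0)
  · intro x hx
    obtain ⟨d, hd, _⟩ := key x hx
    exact hd.continuousAt.continuousWithinAt
  · intro x hx
    rw [interior_Ioi] at hx
    obtain ⟨d, hd, hneg⟩ := key x hx
    rw [hd.deriv]
    exact hneg
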